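/- Let Q be a positive integer, N ≥ 1 a natural number, and let a, s ∈ (ZMod Q)[X] be polynomials of degree < N. Then for every index i < N, the i-th coefficient of the remainder of a·s upon division by the monic polynomial X^N + 1 is given by the negacyclic convolution formula: ((a·s) %ₘ (X^N + 1)).coeff i = Σ_{k=0}^{i} a.coeff(i−k)·s.coeff(k) − Σ_{k=i+1}^{N−1} a.coeff(N+i−k)·s.coeff(k). -/

import Mathlib

open Polynomial Finset

/-- Negacyclic convolution: for polynomials `a, s` over `ZMod Q` of degree `< N`, the
`i`-th coefficient (`i < N`) of `a·s` reduced modulo the monic polynomial `X^N + 1` is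
`∑_{k=0}^{i} a_{i−k}·s_k − ∑_{k=i+1}^{N−1} a_{N+i−k}·s_k`. -/
theorem negacyclic_convolution_coeff (Q : ℕ) (hQ : 0 < Q) (N : ℕ) (hN : 1 ≤ N)
    (a s : Polynomial (ZMod Q))
    (ha : a.degree < (N : WithBot ℕ)) (hs : s.degree < (N : WithBot ℕ)) :
    ∀ i < N,
      ((a * s) %ₘ (X ^ N + 1)).coeff i
        = (∑ k ∈ range (i + 1), a.coeff (i - k) * s.coeff k)
          - ∑ k ∈ Ico (i + 1) N, a.coeff (N + i - k) * s.coeff k := by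
  intro i hi
  cases subsingleton_or_nontrivial (ZMod Q) with
  | inl h => exact Subsingleton.elim _ _
  | inr h =>
  set p := a * s with hp
  -- vanishing of coefficients
  have hacz : ∀ m, N ≤ m → a.coeff m = 0 := fun m hm =>
    coeff_eq_zero_of_degree_lt (lt_of_lt_of_le ha (by exact_mod_cast hm))
  have hscz : ∀ m, N ≤ m → s.coeff m = 0 := fun m hm =>
    coeff_eq_zero_of_degree_lt (lt_of_lt_of_le hs (by exact_mod_cast hm))
  have hpcz : ∀ m, 2 * N ≤ m → p.coeff m = 0 := by
    intro m hm
    rw [hp, coeff_mul]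
    refine Finset.sum_eq_zero fun x hx => ?_
    rw [Finset.HasAntidiagonal.mem_antidiagonal] at hx
    rcases le_or_gt N x.1 with h1 | h1
    · rw [hacz _ h1, zero_mul]
    · rw [hscz _ (by omega), mul_zero]
  set g : Polynomial (ZMod Q) := X ^ N + 1 with hg
  have hmon : g.Monic := monic_X_pow_add (lt_of_le_of_lt degree_one_le (by exact_mod_cast hN))
  set q : Polynomial (ZMod Q) := ∑ j ∈ range N, C (p.coeff (N + j)) * X ^ j with hq
  have hqc : ∀ m, q.coeff m = if m < N then p.coeff (N + m) else 0 := by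
    intro m
    rw [hq, finset_sum_coeff]
    simp only [coeff_C_mul, coeff_X_pow, mul_ite, mul_one, mul_zero]
    rw [Finset.sum_ite_eq (range N) m (fun j => p.coeff (N + j))]
    simp [Finset.mem_range]
  set r : Polynomial (ZMod Q) := p - g * q with hr
  have hrc : ∀ m, r.coeff m = p.coeff m - (if N ≤ m then q.coeff (m - N) else 0) - q.coeff m := by
    intro m
    rw [hr, hg, coeff_sub, add_mul, one_mul, coeff_add, mul_comm (X ^ N) q, coeff_mul_X_pow']
    ring
  have hrdeg : r.degree < (N : WithBot ℕ) := by
    rw [degree_lt_iff_coeff_zero]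
    intro m hm
    have hm' : N ≤ m := by exact_mod_cast hm
    rw [hrc m, hqc, hqc, if_pos hm', if_neg (show ¬ m < N by omega)]
    by_cases h2 : m - N < N
    · rw [if_pos h2]
      have e : N + (m - N) = m := by omega
      rw [e]; ring
    · rw [if_neg h2, hpcz m (by omega)]; ring
  have key : p %ₘ g = r := by
    have : p %ₘ g = r %ₘ g := by
      apply modByMonic_eq_of_dvd_sub hmon
      have : p - r = g * q := by rw [hr]; ring
      rw [this]; exact Dvd.intro q rfl
    have hdg : g.degree = (N : WithBot ℕ) := by
      rw [hg, ← C_1, degree_X_pow_add_C (by omega)]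
    rw [this, (modByMonic_eq_self_iff hmon).2 (hdg ▸ hrdeg)]
  rw [key, hrc i, if_neg (show ¬ N ≤ i by omega), sub_zero, hqc, if_pos hi]
  have h1 : p.coeff i = ∑ k ∈ range (i + 1), a.coeff (i - k) * s.coeff k := by
    rw [hp, coeff_mul, Finset.Nat.sum_antidiagonal_eq_sum_range_succ_mk]
    rw [← Finset.sum_range_reflect]
    refine Finset.sum_congr rfl fun j hj => ?_
    rw [Finset.mem_range] at hj
    have e1 : i + 1 - 1 - j = i - j := by omega
    have e2 : i - (i - j) = j := by omega
    rw [e1, e2]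
  have h2 : p.coeff (N + i) = ∑ k ∈ Ico (i + 1) N, a.coeff (N + i - k) * s.coeff k := by
    rw [hp, coeff_mul, Finset.Nat.sum_antidiagonal_eq_sum_range_succ_mk]
    rw [← Finset.sum_subset (show Ico (i + 1) N ⊆ range (N + i + 1) by
        intro x hx; rw [Finset.mem_Ico] at hx; rw [Finset.mem_range]; omega)
      (fun x hx hx' => ?_)]
    · refine Finset.sum_nbij' (fun k => N + i - k) (fun k => N + i - k) ?_ ?_ ?_ ?_ ?_
      · intro k hk; simp only [Finset.mem_Ico] at *; omega
      · intro k hk; simp only [Finset.mem_Ico] at *; omega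
      · intro k hk; rw [Finset.mem_Ico] at hk; show N + i - (N + i - k) = k; omega
      · intro k hk; rw [Finset.mem_Ico] at hk; show N + i - (N + i - k) = k; omega
      · intro k hk; rw [Finset.mem_Ico] at hk
        have e1 : N + i - (N + i - k) = k := by omega
        rw [e1, mul_comm]
    · rw [Finset.mem_range] at hx; rw [Finset.mem_Ico] at hx'
      rcases lt_or_ge x (i + 1) with h3 | h3
      · rw [hscz (N + i - x) (by omega), mul_zero]
      · rw [hacz x (by omega), zero_mul]
  rw [h1, h2]
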